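/- Let F : I × [0,T] × ℝⁿ → ℝⁿ be a Carathéodory function with ⟨F(λ,t,x), x⟩ > 0 for every λ, a.e. t, and all x with ‖x‖ ≥ R, and let φ : ℝⁿ → ℝⁿ satisfy ⟨φ(ξ),ξ⟩ ≥ 0 for all ξ. If x is a T-periodic solution of (φ(x'))' = F(λ,t,x), then there exists t̃ ∈ [0,T] with ‖x(t̃)‖ < R. -/

import Mathlib

open scoped RealInnerProductSpace

set_option maxHeartbeats 400000 in
open MeasureTheory Set Function in
/-- If `⟨F(λ,t,x),x⟩ > 0` for a.e. `t` whenever `‖x‖ ≥ R`, and `⟨φ(ξ),ξ⟩ ≥ 0`, then any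
`T`-periodic solution `x` of `(φ(x'))' = F(λ,t,x)` (written in integrated form) enters the
ball of radius `R`: there exists `t̃ ∈ [0,T]` with `‖x(t̃)‖ < R`. -/
theorem exists_point_in_ball_of_periodic_solution (n : ℕ) (T : ℝ) (hT : 0 < T) (R : ℝ)
    (φ : EuclideanSpace ℝ (Fin n) → EuclideanSpace ℝ (Fin n))
    (hφ : ∀ ξ : EuclideanSpace ℝ (Fin n), 0 ≤ ⟪φ ξ, ξ⟫)
    (F : ℝ → ℝ → EuclideanSpace ℝ (Fin n) → EuclideanSpace ℝ (Fin n)) (lam : ℝ)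
    (hsign : ∀ᵐ t ∂(MeasureTheory.volume.restrict (Set.Icc (0:ℝ) T)),
      ∀ ξ : EuclideanSpace ℝ (Fin n), R ≤ ‖ξ‖ → 0 < ⟪F lam t ξ, ξ⟫)
    (x : ℝ → EuclideanSpace ℝ (Fin n)) (hx : ContDiff ℝ 1 x)
    (hFi : IntervalIntegrable (fun τ => F lam τ (x τ)) MeasureTheory.volume 0 T)
    (heq : ∀ t ∈ Set.Icc (0:ℝ) T,
      φ (deriv x t) = φ (deriv x 0) + ∫ τ in (0:ℝ)..t, F lam τ (x τ))
    (hper : x 0 = x T) (hper' : deriv x 0 = deriv x T) :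
    ∃ t ∈ Set.Icc (0:ℝ) T, ‖x t‖ < R := by
  by_contra hcon
  push_neg at hcon
  -- hcon : ∀ t ∈ Icc 0 T, R ≤ ‖x t‖
  set f : ℝ → EuclideanSpace ℝ (Fin n) := fun τ => F lam τ (x τ) with hf_def
  set c : EuclideanSpace ℝ (Fin n) := φ (deriv x 0) with hc_def
  set μ : Measure ℝ := volume.restrict (Ioc 0 T) with hμ_def
  have hfI : IntegrableOn f (Ioc 0 T) volume := hFi.1
  have hx' : Continuous (deriv x) := hx.continuous_deriv le_rfl
  have hxc : Continuous x := hx.continuous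
  have hxd : ∀ t : ℝ, DifferentiableAt ℝ x t := fun t => hx.differentiable one_ne_zero t
  -- bounds
  obtain ⟨C, hC⟩ : ∃ C, ∀ t ∈ Icc (0:ℝ) T, ‖x t‖ ≤ C :=
    isCompact_Icc.exists_bound_of_continuousOn hxc.continuousOn
  obtain ⟨M, hM⟩ : ∃ M, ∀ t ∈ Icc (0:ℝ) T, ‖deriv x t‖ ≤ M :=
    isCompact_Icc.exists_bound_of_continuousOn hx'.continuousOn
  have hμuniv : μ Set.univ = ENNReal.ofReal T := by
    simp [hμ_def, Real.volume_Ioc]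
  haveI : IsFiniteMeasure μ := ⟨by rw [hμuniv]; exact ENNReal.ofReal_lt_top⟩
  -- the integral of f over [0,T] vanishes
  have hint0 : ∫ τ in (0:ℝ)..T, f τ = 0 := by
    have h1 := heq T ⟨hT.le, le_rfl⟩
    rw [← hper'] at h1
    have h2 : c + (∫ τ in (0:ℝ)..T, f τ) = c := h1.symm
    exact add_eq_left.mp h2
  have hIoc_int : ∫ τ in Ioc (0:ℝ) T, f τ = 0 := by
    rw [← intervalIntegral.integral_of_le hT.le]; exact hint0
  -- the inner-product integrand τ ↦ ⟪f τ, x τ⟫ is integrable on Ioc 0 T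
  have hgm : AEStronglyMeasurable (fun τ => ⟪f τ, x τ⟫) μ :=
    hfI.aestronglyMeasurable.inner hxc.aestronglyMeasurable
  have hae_mem : ∀ᵐ τ ∂μ, τ ∈ Ioc (0:ℝ) T := ae_restrict_mem measurableSet_Ioc
  have hgi : Integrable (fun τ => ⟪f τ, x τ⟫) μ := by
    refine Integrable.mono (hfI.norm.mul_const C) hgm ?_
    filter_upwards [hae_mem] with τ hτ
    have h1 : ‖⟪f τ, x τ⟫‖ ≤ ‖f τ‖ * ‖x τ‖ := norm_inner_le_norm _ _
    have h2 : ‖x τ‖ ≤ C := hC τ ⟨hτ.1.le, hτ.2⟩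
    have h3 : (0:ℝ) ≤ ‖f τ‖ := norm_nonneg _
    calc ‖⟪f τ, x τ⟫‖ ≤ ‖f τ‖ * ‖x τ‖ := h1
      _ ≤ ‖f τ‖ * C := by nlinarith
      _ ≤ ‖(‖f τ‖ * C)‖ := le_abs_self _
  -- positivity of I = ∫ ⟪f, x⟫
  have hsign' : ∀ᵐ τ ∂μ, ∀ ξ : EuclideanSpace ℝ (Fin n), R ≤ ‖ξ‖ → 0 < ⟪F lam τ ξ, ξ⟫ :=
    ae_mono (Measure.restrict_mono Ioc_subset_Icc_self le_rfl) hsign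
  have hgpos : ∀ᵐ τ ∂μ, 0 < ⟪f τ, x τ⟫ := by
    filter_upwards [hsign', hae_mem] with τ h1 h2
    exact h1 (x τ) (hcon τ ⟨h2.1.le, h2.2⟩)
  have hIpos : 0 < ∫ τ, ⟪f τ, x τ⟫ ∂μ := by
    rw [integral_pos_iff_support_of_nonneg_ae (hgpos.mono fun τ h => h.le) hgi]
    have hnull : μ (support fun τ => ⟪f τ, x τ⟫)ᶜ = 0 := by
      refine measure_mono_null ?_ (ae_iff.mp hgpos)
      intro τ hτ
      simp only [mem_compl_iff, mem_support, not_not] at hτ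
      simp only [mem_setOf_eq, not_lt, hτ, le_refl]
    by_contra h
    push_neg at h
    have h0 : μ (support fun τ => ⟪f τ, x τ⟫) = 0 := le_antisymm h zero_le
    have := measure_union_le (μ := μ) (support fun τ => ⟪f τ, x τ⟫)
      (support fun τ => ⟪f τ, x τ⟫)ᶜ
    rw [union_compl_self, h0, hnull, hμuniv] at this
    simp only [add_zero, nonpos_iff_eq_zero, ENNReal.ofReal_eq_zero] at this
    linarith
  -- the primitive P
  set P : ℝ → EuclideanSpace ℝ (Fin n) := fun t => ∫ τ in (0:ℝ)..t, f τ with hP_def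
  have hPcont : ContinuousOn P (Icc (0:ℝ) T) := by
    have := intervalIntegral.continuousOn_primitive_interval' hFi
      (by rw [uIcc_of_le hT.le]; exact ⟨le_rfl, hT.le⟩)
    rwa [uIcc_of_le hT.le] at this
  -- the kernel H for Fubini
  set K : ℝ × ℝ → ℝ := fun p => ⟪f p.1, deriv x p.2⟫ with hK_def
  set S : Set (ℝ × ℝ) := {p : ℝ × ℝ | p.1 ≤ p.2} with hS_def
  have hSmeas : MeasurableSet S := (isClosed_le continuous_fst continuous_snd).measurableSet
  set H : ℝ → ℝ → ℝ := fun τ t => if τ ≤ t then ⟪f τ, deriv x t⟫ else 0 with hH_def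
  have hHuncurry : uncurry H = S.indicator K := by
    ext p
    simp [uncurry, hH_def, indicator_apply, hS_def, hK_def]
  -- integrability of uncurry H on the product
  have hfIμ : Integrable f μ := hfI
  have hKaesm : AEStronglyMeasurable K (μ.prod μ) :=
    (hfIμ.aestronglyMeasurable.comp_fst).inner (hx'.comp continuous_snd).aestronglyMeasurable
  have hprodμ : μ.prod μ = (volume.prod volume).restrict ((Ioc (0:ℝ) T) ×ˢ (Ioc (0:ℝ) T)) := by
    rw [hμ_def, Measure.prod_restrict]
  have hprod_ae : ∀ᵐ p : ℝ × ℝ ∂(μ.prod μ), p ∈ (Ioc (0:ℝ) T) ×ˢ (Ioc (0:ℝ) T) := by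
    rw [hprodμ]
    exact ae_restrict_mem (measurableSet_Ioc.prod measurableSet_Ioc)
  have hHint : Integrable (uncurry H) (μ.prod μ) := by
    rw [hHuncurry]
    refine Integrable.mono ((hfIμ.norm.mul_prod (integrable_const M))) 
      (hKaesm.indicator hSmeas) ?_
    filter_upwards [hprod_ae] with p hp
    have hb : ‖deriv x p.2‖ ≤ M := hM p.2 ⟨hp.2.1.le, hp.2.2⟩
    have h3 : (0:ℝ) ≤ ‖f p.1‖ := norm_nonneg _
    have h1 : ‖S.indicator K p‖ ≤ ‖f p.1‖ * ‖deriv x p.2‖ := by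
      by_cases h : p ∈ S
      · rw [indicator_of_mem h]; exact norm_inner_le_norm _ _
      · rw [indicator_of_notMem h]
        simpa using mul_nonneg (norm_nonneg _) (norm_nonneg _)
    calc ‖S.indicator K p‖ ≤ ‖f p.1‖ * ‖deriv x p.2‖ := h1
      _ ≤ ‖f p.1‖ * M := by nlinarith
      _ ≤ ‖(‖f p.1‖ * M)‖ := le_abs_self _
  -- pointwise inner integrals
  have hinnerτ : ∀ t ∈ Ioc (0:ℝ) T, (∫ τ, H τ t ∂μ) = ⟪P t, deriv x t⟫ := by
    intro t ht
    have h1 : (fun τ => H τ t) = (Iic t).indicator (fun τ => ⟪f τ, deriv x t⟫) := by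
      ext τ; simp [hH_def, indicator_apply, mem_Iic]
    rw [hμ_def, h1, setIntegral_indicator measurableSet_Iic]
    have h2 : Ioc (0:ℝ) T ∩ Iic t = Ioc 0 t := by
      rw [Ioc_inter_Iic, min_eq_right ht.2]
    rw [h2]
    have h3 : ∀ τ', ⟪f τ', deriv x t⟫ = ⟪deriv x t, f τ'⟫ := fun τ' => real_inner_comm _ _
    simp_rw [h3]
    rw [integral_inner (hfI.mono_set (Ioc_subset_Ioc le_rfl ht.2))]
    rw [real_inner_comm]
    congr 1
    rw [hP_def]
    exact (intervalIntegral.integral_of_le ht.1.le).symm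
  have hinnert : ∀ τ ∈ Ioc (0:ℝ) T, (∫ t, H τ t ∂μ) = ⟪f τ, x T - x τ⟫ := by
    intro τ hτ
    have h1 : (fun t => H τ t) = (Ici τ).indicator (fun t => ⟪f τ, deriv x t⟫) := by
      ext t; simp [hH_def, indicator_apply, mem_Ici]
    rw [hμ_def, h1, setIntegral_indicator measurableSet_Ici]
    have h2 : Ioc (0:ℝ) T ∩ Ici τ = Icc τ T := by
      ext s; simp only [mem_inter_iff, mem_Ioc, mem_Ici, mem_Icc]
      constructor
      · rintro ⟨⟨_, h⟩, h'⟩; exact ⟨h', h⟩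
      · rintro ⟨h', h⟩; exact ⟨⟨lt_of_lt_of_le hτ.1 h', h⟩, h'⟩
    rw [h2, integral_Icc_eq_integral_Ioc]
    rw [integral_inner (hx'.integrableOn_Ioc)]
    congr 1
    rw [← intervalIntegral.integral_of_le hτ.2]
    exact intervalIntegral.integral_deriv_eq_sub (fun t _ => hxd t)
      (hx'.intervalIntegrable τ T)
  have hswap : (∫ τ, ∫ t, H τ t ∂μ ∂μ) = ∫ t, ∫ τ, H τ t ∂μ ∂μ :=
    integral_integral_swap hHint
  have hPint : Integrable (fun t => ⟪P t, deriv x t⟫) μ := by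
    have hco : ContinuousOn (fun t => ⟪P t, deriv x t⟫) (Icc (0:ℝ) T) :=
      hPcont.inner hx'.continuousOn
    exact hco.integrableOn_Icc.mono_set Ioc_subset_Icc_self
  have hstep1 : (∫ t, ⟪P t, deriv x t⟫ ∂μ) = - ∫ τ, ⟪f τ, x τ⟫ ∂μ := by
    have e1 : (∫ t, ∫ τ, H τ t ∂μ ∂μ) = ∫ t, ⟪P t, deriv x t⟫ ∂μ :=
      integral_congr_ae (by filter_upwards [hae_mem] with t ht using hinnerτ t ht)
    have e2 : (∫ τ, ∫ t, H τ t ∂μ ∂μ) = ∫ τ, ⟪f τ, x T - x τ⟫ ∂μ :=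
      integral_congr_ae (by filter_upwards [hae_mem] with τ hτ using hinnert τ hτ)
    have e3 : (∫ τ, ⟪f τ, x T - x τ⟫ ∂μ) = - ∫ τ, ⟪f τ, x τ⟫ ∂μ := by
      have h4 : ∀ τ, ⟪f τ, x T - x τ⟫ = ⟪f τ, x T⟫ - ⟪f τ, x τ⟫ :=
        fun τ => inner_sub_right _ _ _
      simp_rw [h4]
      rw [integral_sub (hfIμ.inner_const (x T)) hgi]
      have h5 : (∫ τ, ⟪f τ, x T⟫ ∂μ) = 0 := by
        have h6 : ∀ τ', ⟪f τ', x T⟫ = ⟪x T, f τ'⟫ := fun τ' => real_inner_comm _ _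
        simp_rw [h6]
        rw [integral_inner hfIμ]
        have h7 : (∫ τ, f τ ∂μ) = 0 := hIoc_int
        rw [h7]
        simp
      rw [h5]; ring
    rw [← e1, ← hswap, e2, e3]
  have hx'int : Integrable (deriv x) μ :=
    hx'.continuousOn.integrableOn_Icc.mono_set Ioc_subset_Icc_self
  have hcterm : (∫ t, ⟪c, deriv x t⟫ ∂μ) = 0 := by
    have h8 : (∫ t, deriv x t ∂μ) = x T - x 0 := by
      have h9 : (∫ t, deriv x t ∂μ) = ∫ t in (0:ℝ)..T, deriv x t :=
        (intervalIntegral.integral_of_le hT.le).symm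
      rw [h9]
      exact intervalIntegral.integral_deriv_eq_sub (fun t _ => hxd t)
        (hx'.intervalIntegrable 0 T)
    rw [integral_inner hx'int, h8, ← hper]
    simp
  have hcint : Integrable (fun t => ⟪c, deriv x t⟫) μ :=
    (continuous_const.inner hx').continuousOn.integrableOn_Icc.mono_set Ioc_subset_Icc_self
  have hA0 : 0 ≤ ∫ t, ⟪φ (deriv x t), deriv x t⟫ ∂μ :=
    integral_nonneg (fun t => hφ _)
  have hAeq : (∫ t, ⟪φ (deriv x t), deriv x t⟫ ∂μ)
      = (∫ t, ⟪c, deriv x t⟫ ∂μ) + ∫ t, ⟪P t, deriv x t⟫ ∂μ := by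
    rw [← integral_add hcint hPint]
    refine integral_congr_ae ?_
    filter_upwards [hae_mem] with t ht
    have h10 : φ (deriv x t) = c + P t := heq t ⟨ht.1.le, ht.2⟩
    rw [h10, inner_add_left]
  rw [hAeq, hcterm, hstep1, zero_add] at hA0
  linarith [hIpos]
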